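/- Let m and p be positive integers, l = 4mp + 2p − 1 and t = 4mp − 1, so that p' = (2m+1)p − 1. Then for every k with 1 ≤ k ≤ p': σ_{i_k} = −1 if ⌈k/p⌉ is odd, and σ_{i_k} = 1 if ⌈k/p⌉ is even. -/
import Mathlib


/-- `σ_j = (-1)^{⌊(2j-1)t/l⌋}`. -/
def sigmaF (l t j : ℕ) : ℤ := (-1) ^ ((2 * j - 1) * t / l)

/-- `r(j)`: the unique integer with `r(j) ≡ (2j-1)t (mod 2l)` and `-l < r(j) < l`. -/
def rF (l t j : ℕ) : ℤ :=
  if (((2 * j - 1) * t : ℕ) : ℤ) % (2 * l) < l then (((2 * j - 1) * t : ℕ) : ℤ) % (2 * l)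
  else (((2 * j - 1) * t : ℕ) : ℤ) % (2 * l) - 2 * l

/-- `r'(j) = (|r(j)| + 1)/2`. -/
def rpF (l t j : ℕ) : ℤ := (|rF l t j| + 1) / 2

theorem stmt4 (m p l t p' : ℕ) (hm : 1 ≤ m) (hp : 1 ≤ p)
    (hl : l = 4*m*p + 2*p - 1) (ht : t = 4*m*p - 1) (hp' : p' = (2*m+1)*p - 1)
    (k : ℕ) (hk1 : 1 ≤ k) (hk2 : k ≤ p')
    (j : ℕ) (hj1 : 1 ≤ j) (hj2 : j ≤ p') (hrj : rpF l t j = (k : ℤ)) :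
    sigmaF l t j = if ((k + p - 1) / p) % 2 = 1 then -1 else 1 := by
  subst hl ht hp'
  have hmp : 1*1 ≤ m*p := Nat.mul_le_mul hm hp
  have hmp4 : 4*m*p = 4*(m*p) := by ring
  have hL1 : 1 ≤ 4*m*p := by omega
  have hL0 : 0 < 4*m*p + 2*p - 1 := by omega
  obtain ⟨a, b, hdm, hb2m⟩ : ∃ a b, (2*m+1)*a + b = j - 1 ∧ b < 2*m+1 :=
    ⟨_, _, Nat.div_add_mod _ _, Nat.mod_lt _ (by omega)⟩
  have hj' : j = (2*m+1)*a + b + 1 := by omega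
  have hjp : (2*m+1)*a + b + 2 ≤ (2*m+1)*p := by omega
  have hap : a < p := by
    by_contra h
    have : (2*m+1)*p ≤ (2*m+1)*a := Nat.mul_le_mul_left _ (by omega)
    omega
  have hjZ : (j:ℤ) = (2*m+1)*a + b + 1 := by exact_mod_cast congrArg Nat.cast hj'
  by_cases hbm : b < m
  · -- case A : sigma = 1, ceil even
    obtain ⟨u, hbu⟩ : ∃ u, b + u = m := ⟨m - b, by omega⟩
    have hu1 : 1 ≤ u := by omega
    have hpu : p ≤ p*u := Nat.le_mul_of_pos_right _ (by omega)
    have hpu4 : 4*p*u = 4*(p*u) := by ring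
    have hxpos : 2*a+1 ≤ 4*p*u := by omega
    have hxL : 4*p*u - (2*a+1) < 4*m*p + 2*p - 1 := by
      have h1 : 4*p*u ≤ 4*p*m := Nat.mul_le_mul_left _ (by omega)
      have h2 : 4*p*m = 4*m*p := by ring
      omega
    have hN : (2*j-1) * (4*m*p-1) = 2*(4*m*p+2*p-1)*(2*a*m+b) + (4*p*u - (2*a+1)) := by
      have hmZ : (m:ℤ) = b + u := by exact_mod_cast congrArg Nat.cast hbu.symm
      zify [hxpos, (show 1 ≤ 2*j by omega), hL1, (show 1 ≤ 4*m*p + 2*p by omega)]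
      rw [hjZ, hmZ]; ring
    have hxz : ((4*p*u - (2*a+1) : ℕ) : ℤ) = 4*(p:ℤ)*u - (2*a+1) := by
      rw [Nat.cast_sub hxpos]; push_cast; ring
    have hmod : (((2*j-1) * (4*m*p-1) : ℕ) : ℤ) % (2*(4*m*p+2*p-1 : ℕ)) =
        ((4*p*u - (2*a+1) : ℕ) : ℤ) := by
      have h1 : (((2*j-1) * (4*m*p-1) : ℕ) : ℤ)
          = 2*((4*m*p+2*p-1 : ℕ):ℤ)*(2*a*m+b : ℕ) + ((4*p*u - (2*a+1) : ℕ):ℤ) := by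
        exact_mod_cast congrArg Nat.cast hN
      rw [h1, show (2*((4*m*p+2*p-1 : ℕ):ℤ)*(2*a*m+b : ℕ) + ((4*p*u - (2*a+1) : ℕ):ℤ))
          = ((4*p*u - (2*a+1) : ℕ):ℤ) + (2*((4*m*p+2*p-1 : ℕ):ℤ))*(2*a*m+b : ℕ) by ring,
        Int.add_mul_emod_self_left,
        Int.emod_eq_of_lt (by positivity) (by exact_mod_cast (by omega : 4*p*u - (2*a+1) < 2*(4*m*p+2*p-1)))]
    have hrF : rF (4*m*p+2*p-1) (4*m*p-1) j = ((4*p*u - (2*a+1) : ℕ) : ℤ) := by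
      rw [rF, if_pos]
      · exact hmod
      · rw [hmod]; exact_mod_cast hxL
    have hpuZ : ((p*u : ℕ) : ℤ) = (p:ℤ)*u := by push_cast; ring
    rw [rpF, hrF, abs_of_nonneg (by positivity), hxz,
      show (4*(p:ℤ)*u - (2*a+1) + 1) = 2*(2*((p:ℤ)*u) - a) by ring,
      Int.mul_ediv_cancel_left _ (two_ne_zero)] at hrj
    have hkn : k + a = 2*(p*u) := by omega
    have hceil : (k + p - 1) / p = 2*u := by
      have h2 : p*(2*u) = 2*(p*u) := by ring
      rw [show k + p - 1 = p*(2*u) + (p - 1 - a) by omega,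
        Nat.mul_add_div (by omega), Nat.div_eq_of_lt (by omega)]
      omega
    have hdiv : (2*j-1) * (4*m*p-1) / (4*m*p+2*p-1) = 2*(2*a*m+b) := by
      rw [hN, show 2*(4*m*p+2*p-1)*(2*a*m+b) + (4*p*u - (2*a+1))
          = (4*m*p+2*p-1)*(2*(2*a*m+b)) + (4*p*u - (2*a+1)) by ring,
        Nat.mul_add_div hL0, Nat.div_eq_of_lt hxL]
      omega
    rw [sigmaF, hdiv, hceil, if_neg (by omega), Even.neg_one_pow ⟨2*a*m+b, by ring⟩]
  · -- case B : sigma = -1, ceil odd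
    obtain ⟨w, hbw⟩ : ∃ w, b = m + w := ⟨b - m, by omega⟩
    have hwm : w ≤ m := by omega
    have hpw4 : 4*p*w = 4*(p*w) := by ring
    have hxb : 4*p*w + 2*a + 1 < 4*m*p + 2*p - 1 := by
      rcases Nat.lt_or_ge w m with h | h
      · have h1 : 4*p*(w+1) ≤ 4*p*m := Nat.mul_le_mul_left _ (by omega)
        have h2 : 4*p*(w+1) = 4*p*w + 4*p := by ring
        have h3 : 4*p*m = 4*m*p := by ring
        omega
      · have hwm' : w = m := by omega
        have hb2 : b = 2*m := by omega
        have hbr : (2*m+1)*(a+1) = (2*m+1)*a + 2*m + 1 := by ring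
        have h1 : (2*m+1)*(a+1) < (2*m+1)*p := by omega
        have hap2 : a + 1 < p := Nat.lt_of_mul_lt_mul_left h1
        have h4 : 4*p*w = 4*m*p := by rw [hwm']; ring
        omega
    have hxle : 4*p*w + 2*a + 1 ≤ 2*(4*m*p+2*p-1) := by omega
    have hxL : 4*m*p+2*p-1 < 2*(4*m*p+2*p-1) - (4*p*w + 2*a + 1)
        ∧ 2*(4*m*p+2*p-1) - (4*p*w + 2*a + 1) < 2*(4*m*p+2*p-1) := by omega
    have hq1 : 1 ≤ 2*a*m + b := by omega
    have hN : (2*j-1) * (4*m*p-1) = 2*(4*m*p+2*p-1)*(2*a*m+b-1)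
        + (2*(4*m*p+2*p-1) - (4*p*w + 2*a + 1)) := by
      have hbZ : (b:ℤ) = m + w := by exact_mod_cast congrArg Nat.cast hbw
      zify [hxle, hq1, (show 1 ≤ 2*j by omega), hL1, (show 1 ≤ 4*m*p + 2*p by omega)]
      rw [hjZ, hbZ]; ring
    have hxz : ((2*(4*m*p+2*p-1) - (4*p*w + 2*a + 1) : ℕ) : ℤ)
        = 2*((4*m*p+2*p-1 : ℕ):ℤ) - (4*(p:ℤ)*w + 2*a + 1) := by
      rw [Nat.cast_sub hxle]; push_cast [hL1]; ring
    have hmod : (((2*j-1) * (4*m*p-1) : ℕ) : ℤ) % (2*(4*m*p+2*p-1 : ℕ)) =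
        ((2*(4*m*p+2*p-1) - (4*p*w + 2*a + 1) : ℕ) : ℤ) := by
      have h1 : (((2*j-1) * (4*m*p-1) : ℕ) : ℤ)
          = 2*((4*m*p+2*p-1 : ℕ):ℤ)*(2*a*m+b-1 : ℕ)
            + ((2*(4*m*p+2*p-1) - (4*p*w + 2*a + 1) : ℕ):ℤ) := by
        exact_mod_cast congrArg Nat.cast hN
      rw [h1, show (2*((4*m*p+2*p-1 : ℕ):ℤ)*(2*a*m+b-1 : ℕ)
            + ((2*(4*m*p+2*p-1) - (4*p*w + 2*a + 1) : ℕ):ℤ))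
          = ((2*(4*m*p+2*p-1) - (4*p*w + 2*a + 1) : ℕ):ℤ)
            + (2*((4*m*p+2*p-1 : ℕ):ℤ))*(2*a*m+b-1 : ℕ) by ring,
        Int.add_mul_emod_self_left,
        Int.emod_eq_of_lt (by positivity) (by exact_mod_cast hxL.2)]
    have hrF : rF (4*m*p+2*p-1) (4*m*p-1) j
        = ((2*(4*m*p+2*p-1) - (4*p*w + 2*a + 1) : ℕ) : ℤ) - 2*(4*m*p+2*p-1 : ℕ) := by
      rw [rF, if_neg (by rw [hmod]; push_neg; exact_mod_cast hxL.1.le), hmod]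
    have habs : |((2*(4*m*p+2*p-1) - (4*p*w + 2*a + 1) : ℕ) : ℤ) - 2*(4*m*p+2*p-1 : ℕ)|
        = 4*(p:ℤ)*w + 2*a + 1 := by
      rw [hxz, show (2*((4*m*p+2*p-1 : ℕ):ℤ) - (4*(p:ℤ)*w + 2*a + 1)) - 2*(4*m*p+2*p-1 : ℕ)
          = -(4*(p:ℤ)*w + 2*a + 1) by ring, abs_neg, abs_of_nonneg (by positivity)]
    have hpwZ : ((p*w : ℕ) : ℤ) = (p:ℤ)*w := by push_cast; ring
    rw [rpF, hrF, habs, show (4*(p:ℤ)*w + 2*a + 1 + 1) = 2*(2*((p:ℤ)*w) + a + 1) by ring,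
      Int.mul_ediv_cancel_left _ (two_ne_zero)] at hrj
    have hkn : k = 2*(p*w) + a + 1 := by omega
    have hceil : (k + p - 1) / p = 2*w + 1 := by
      have h2 : p*(2*w+1) = 2*(p*w) + p := by ring
      rw [show k + p - 1 = p*(2*w+1) + a by omega,
        Nat.mul_add_div (by omega), Nat.div_eq_of_lt (by omega)]
    have hxdiv : (2*(4*m*p+2*p-1) - (4*p*w + 2*a + 1)) / (4*m*p+2*p-1) = 1 :=
      Nat.div_eq_of_lt_le (by omega) (by omega)
    have hdiv : (2*j-1) * (4*m*p-1) / (4*m*p+2*p-1) = 2*(2*a*m+b-1) + 1 := by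
      rw [hN, show 2*(4*m*p+2*p-1)*(2*a*m+b-1) + (2*(4*m*p+2*p-1) - (4*p*w + 2*a + 1))
          = (2*(4*m*p+2*p-1) - (4*p*w + 2*a + 1)) + (4*m*p+2*p-1)*(2*(2*a*m+b-1)) by ring,
        Nat.add_mul_div_left _ _ hL0, hxdiv]
      omega
    rw [sigmaF, hdiv, hceil, if_pos (by omega), Odd.neg_one_pow ⟨2*a*m+b-1, by omega⟩]
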